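/- Let 1<m≤n and let K be a field with involution. Then there is a surjective *-algebra homomorphism π : L(m,n) → L(1,n−m+1) determined by π(x_{ij}) = δ_{ij}·1 for 1≤i≤m−1 and 1≤j≤n, π(x_{mj}) = 0 for 1≤j≤m−1, and π(x_{mj}) = x_{j−m+1} for m≤j≤n, where x_1,…,x_{n−m+1} are the standard generators of L(1,n−m+1). -/

import Mathlib

open Sum

noncomputable section
open scoped Classical


variable (K : Type) [Field K] [StarRing K]
/-- A representation of the defining relations of the Leavitt algebra `L(m,n)`:
an `m × n` matrix `X = (x i j)` of elements of `A` with `X X* = Iₘ` and `X* X = Iₙ`. -/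
structure LmnRep (K : Type) [Field K] [StarRing K] (m n : ℕ) (A : Type) [Ring A]
    [Algebra K A] [StarRing A] [StarModule K A] where
  x : Fin m → Fin n → A
  row : ∀ i j : Fin m, ∑ k, x i k * star (x j k) = if i = j then 1 else 0
  col : ∀ i j : Fin n, ∑ k, star (x k i) * x k j = if i = j then 1 else 0

/-- `L` (with the representation `ρ`) *is* the Leavitt algebra `L(m,n)`: the universal
unital `*`-algebra over `K` on the entries of an `m × n` matrix `X` with `X X* = Iₘ`,
`X* X = Iₙ`. -/
def IsLmn (K : Type) [Field K] [StarRing K] (m n : ℕ) (L : Type) [Ring L] [Algebra K L]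
    [StarRing L] [StarModule K L] (ρ : LmnRep K m n L) : Prop :=
  ∀ (A : Type) [Ring A] [Algebra K A] [StarRing A] [StarModule K A] (σ : LmnRep K m n A),
    ∃! φ : L →⋆ₐ[K] A, ∀ i j, φ (ρ.x i j) = σ.x i j

def extRep (m n : ℕ) (hm : 1 ≤ m) (hmn : m ≤ n) (A : Type) [Ring A] [Algebra K A]
    [StarRing A] [StarModule K A] (σ : LmnRep K 1 (n - m + 1) A) : LmnRep K m n A where
  x i j :=
    if (i : ℕ) < m - 1 then (if (i : ℕ) = (j : ℕ) then 1 else 0)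
    else if (j : ℕ) < m - 1 then 0
    else σ.x 0 ⟨(j : ℕ) - (m - 1), by have hj := j.2; omega⟩
  row i j := by
    have hab : (m - 1) + (n - m + 1) = n := by omega
    set e : Fin (m - 1) ⊕ Fin (n - m + 1) ≃ Fin n := finSumFinEquiv.trans (finCongr hab) with he
    have hv1 : ∀ c : Fin (m - 1), ((e (inl c) : Fin n) : ℕ) = (c : ℕ) := by
      intro c; simp [he]
    have hv2 : ∀ c : Fin (n - m + 1), ((e (inr c) : Fin n) : ℕ) = (m - 1) + (c : ℕ) := by
      intro c; simp [he]
    by_cases hi : (i : ℕ) < m - 1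
    · by_cases hj : (j : ℕ) < m - 1
      · simp only [hi, hj, if_true]
        have key : ∀ k : Fin n,
            (if (i : ℕ) = (k : ℕ) then (1 : A) else 0) * star (if (j : ℕ) = (k : ℕ) then (1 : A) else 0)
            = if (⟨(i : ℕ), by omega⟩ : Fin n) = k then (if (j : ℕ) = (i : ℕ) then (1 : A) else 0) else 0 := by
          intro k
          by_cases h : (i : ℕ) = (k : ℕ)
          · rw [if_pos h, if_pos (show (⟨(i : ℕ), by omega⟩ : Fin n) = k from Fin.ext h), ← h,
              one_mul]
            split_ifs with h2 <;> simp
          · rw [if_neg h, zero_mul, if_neg (by simpa [Fin.ext_iff] using h)]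
        simp_rw [key]
        rw [Finset.sum_ite_eq]
        simp [Fin.ext_iff, eq_comm]
      · have hij : i ≠ j := by intro h; apply hj; rw [← h]; exact hi
        simp only [hi, hj, if_true, if_false, hij]
        have key : ∀ k : Fin n,
            (if (i : ℕ) = (k : ℕ) then (1 : A) else 0) *
              star (if (k : ℕ) < m - 1 then (0 : A)
                else σ.x 0 ⟨(k : ℕ) - (m - 1), by have := k.2; omega⟩) = 0 := by
          intro k
          by_cases h : (i : ℕ) = (k : ℕ)
          · rw [if_pos h, one_mul, if_pos (by omega : (k : ℕ) < m - 1), star_zero]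
          · rw [if_neg h, zero_mul]
        simp_rw [key]
        simp
    · by_cases hj : (j : ℕ) < m - 1
      · have hij : i ≠ j := by intro h; apply hi; rw [h]; exact hj
        simp only [hi, hj, if_true, if_false, hij]
        have key : ∀ k : Fin n,
            (if (k : ℕ) < m - 1 then (0 : A)
                else σ.x 0 ⟨(k : ℕ) - (m - 1), by have := k.2; omega⟩) *
              star (if (j : ℕ) = (k : ℕ) then (1 : A) else 0) = 0 := by
          intro k
          by_cases h : (j : ℕ) = (k : ℕ)
          · rw [if_pos (by omega : (k : ℕ) < m - 1), zero_mul]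
          · rw [if_neg h, star_zero, mul_zero]
        simp_rw [key]
        simp
      · have hij : i = j := by
          have hi2 := i.2; have hj2 := j.2
          exact Fin.ext (by omega)
        subst hij
        simp only [hi, if_false, if_pos rfl]
        rw [← Equiv.sum_comp e, Fintype.sum_sum_type]
        have k1 : ∀ c : Fin (m - 1),
            (if ((e (inl c) : Fin n) : ℕ) < m - 1 then (0 : A)
                else σ.x 0 ⟨((e (inl c) : Fin n) : ℕ) - (m - 1), by have := (e (inl c)).2; omega⟩) *
              star (if ((e (inl c) : Fin n) : ℕ) < m - 1 then (0 : A)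
                else σ.x 0 ⟨((e (inl c) : Fin n) : ℕ) - (m - 1), by have := (e (inl c)).2; omega⟩) = 0 := by
          intro c
          rw [if_pos (by rw [hv1]; exact c.2), zero_mul]
        have k2 : ∀ c : Fin (n - m + 1),
            (if ((e (inr c) : Fin n) : ℕ) < m - 1 then (0 : A)
                else σ.x 0 ⟨((e (inr c) : Fin n) : ℕ) - (m - 1), by have := (e (inr c)).2; omega⟩) *
              star (if ((e (inr c) : Fin n) : ℕ) < m - 1 then (0 : A)
                else σ.x 0 ⟨((e (inr c) : Fin n) : ℕ) - (m - 1), by have := (e (inr c)).2; omega⟩)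
            = σ.x 0 c * star (σ.x 0 c) := by
          intro c
          have hlt : ¬ ((e (inr c) : Fin n) : ℕ) < m - 1 := by rw [hv2]; omega
          have hfix : (⟨((e (inr c) : Fin n) : ℕ) - (m - 1), by have := (e (inr c)).2; omega⟩ :
              Fin (n - m + 1)) = c := Fin.ext (show ((e (inr c) : Fin n) : ℕ) - (m - 1) = (c : ℕ) by have := hv2 c; omega)
          rw [if_neg hlt, hfix]
        simp_rw [k1, k2]
        have hrow := σ.row 0 0
        simp only [if_pos rfl] at hrow
        simp [hrow]
  col i j := by
    have hab : (m - 1) + 1 = m := by omega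
    set e : Fin (m - 1) ⊕ Fin 1 ≃ Fin m := finSumFinEquiv.trans (finCongr hab) with he
    have hv1 : ∀ c : Fin (m - 1), ((e (inl c) : Fin m) : ℕ) = (c : ℕ) := by
      intro c; simp [he]
    have hv2 : ∀ c : Fin 1, ((e (inr c) : Fin m) : ℕ) = m - 1 := by
      intro c; simp [he, Fin.fin_one_eq_zero c]
    rw [← Equiv.sum_comp e, Fintype.sum_sum_type]
    have k1 : ∀ c : Fin (m - 1),
        star (if ((e (inl c) : Fin m) : ℕ) < m - 1 then (if ((e (inl c) : Fin m) : ℕ) = (i : ℕ) then (1 : A) else 0)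
            else if (i : ℕ) < m - 1 then 0 else σ.x 0 ⟨(i : ℕ) - (m - 1), by have := i.2; omega⟩) *
          (if ((e (inl c) : Fin m) : ℕ) < m - 1 then (if ((e (inl c) : Fin m) : ℕ) = (j : ℕ) then (1 : A) else 0)
            else if (j : ℕ) < m - 1 then 0 else σ.x 0 ⟨(j : ℕ) - (m - 1), by have := j.2; omega⟩)
        = if (c : ℕ) = (i : ℕ) ∧ (c : ℕ) = (j : ℕ) then 1 else 0 := by
      intro c
      have hc : ((e (inl c) : Fin m) : ℕ) < m - 1 := by rw [hv1]; exact c.2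
      rw [if_pos hc, if_pos hc, hv1]
      by_cases h1 : (c : ℕ) = (i : ℕ) <;> by_cases h2 : (c : ℕ) = (j : ℕ) <;>
        simp [h1, h2] <;> split_ifs <;> simp
    have k2 : ∀ c : Fin 1,
        star (if ((e (inr c) : Fin m) : ℕ) < m - 1 then (if ((e (inr c) : Fin m) : ℕ) = (i : ℕ) then (1 : A) else 0)
            else if (i : ℕ) < m - 1 then 0 else σ.x 0 ⟨(i : ℕ) - (m - 1), by have := i.2; omega⟩) *
          (if ((e (inr c) : Fin m) : ℕ) < m - 1 then (if ((e (inr c) : Fin m) : ℕ) = (j : ℕ) then (1 : A) else 0)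
            else if (j : ℕ) < m - 1 then 0 else σ.x 0 ⟨(j : ℕ) - (m - 1), by have := j.2; omega⟩)
        = star (if (i : ℕ) < m - 1 then (0 : A) else σ.x 0 ⟨(i : ℕ) - (m - 1), by have := i.2; omega⟩) *
          (if (j : ℕ) < m - 1 then (0 : A) else σ.x 0 ⟨(j : ℕ) - (m - 1), by have := j.2; omega⟩) := by
      intro c
      have hc : ¬ ((e (inr c) : Fin m) : ℕ) < m - 1 := by rw [hv2]; omega
      rw [if_neg hc, if_neg hc]
    simp_rw [k1, k2]
    rw [Fin.sum_univ_one]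
    by_cases hi : (i : ℕ) < m - 1
    · by_cases hj : (j : ℕ) < m - 1
      · rw [if_pos hi, star_zero, zero_mul, add_zero]
        have key : ∀ c : Fin (m - 1),
            (if (c : ℕ) = (i : ℕ) ∧ (c : ℕ) = (j : ℕ) then (1 : A) else 0)
            = if (⟨(i : ℕ), hi⟩ : Fin (m - 1)) = c then (if (j : ℕ) = (i : ℕ) then (1 : A) else 0) else 0 := by
          intro c
          by_cases h : (c : ℕ) = (i : ℕ)
          · rw [if_pos (show (⟨(i : ℕ), hi⟩ : Fin (m - 1)) = c from Fin.ext h.symm)]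
            by_cases h2 : (c : ℕ) = (j : ℕ)
            · rw [if_pos ⟨h, h2⟩, if_pos (by omega)]
            · rw [if_neg (fun hc => h2 hc.2), if_neg (by omega)]
          · rw [if_neg (fun hc => h hc.1),
              if_neg (show ¬(⟨(i : ℕ), hi⟩ : Fin (m - 1)) = c from
                fun hc => h (congrArg Fin.val hc).symm)]
        simp_rw [key]
        rw [Finset.sum_ite_eq]
        simp [Fin.ext_iff, eq_comm]
      · have hij : i ≠ j := fun h => hj (h ▸ hi)
        rw [if_pos hi, star_zero, zero_mul, add_zero, if_neg hij]
        have key : ∀ c : Fin (m - 1),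
            (if (c : ℕ) = (i : ℕ) ∧ (c : ℕ) = (j : ℕ) then (1 : A) else 0) = 0 := by
          intro c
          rw [if_neg]
          rintro ⟨-, h2⟩; exact hj (by omega)
        simp_rw [key]
        simp
    · by_cases hj : (j : ℕ) < m - 1
      · have hij : i ≠ j := fun h => hi (h ▸ hj)
        rw [if_pos hj, mul_zero, add_zero, if_neg hij]
        have key : ∀ c : Fin (m - 1),
            (if (c : ℕ) = (i : ℕ) ∧ (c : ℕ) = (j : ℕ) then (1 : A) else 0) = 0 := by
          intro c
          rw [if_neg]
          rintro ⟨h1, -⟩; exact hi (by omega)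
        simp_rw [key]
        simp
      · rw [if_neg hi, if_neg hj]
        have key : ∀ c : Fin (m - 1),
            (if (c : ℕ) = (i : ℕ) ∧ (c : ℕ) = (j : ℕ) then (1 : A) else 0) = 0 := by
          intro c
          rw [if_neg]
          rintro ⟨h1, -⟩; exact hi (by omega)
        simp_rw [key]
        have hcol := σ.col ⟨(i : ℕ) - (m - 1), by have := i.2; omega⟩ ⟨(j : ℕ) - (m - 1), by have := j.2; omega⟩
        rw [Fin.sum_univ_one] at hcol
        rw [Finset.sum_const_zero, zero_add, hcol]
        have : ((⟨(i : ℕ) - (m - 1), by have := i.2; omega⟩ : Fin (n - m + 1)) =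
            ⟨(j : ℕ) - (m - 1), by have := j.2; omega⟩) ↔ i = j := by
          rw [Fin.ext_iff, Fin.ext_iff]
          constructor <;> intro h <;> simp at h ⊢ <;> omega
        simp only [this]

/-- **Statement 15.** For `1 < m ≤ n` there is a surjective `*`-algebra homomorphism
`π : L(m,n) → L(1, n−m+1)` with `π(x_{ij}) = δ_{ij}·1` for `1 ≤ i ≤ m−1`,
`π(x_{mj}) = 0` for `1 ≤ j ≤ m−1`, and `π(x_{mj}) = x_{j−m+1}` for `m ≤ j ≤ n`
(indices `1`-based; below, `Fin`-indices are `0`-based). -/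
theorem statement15 (m n : ℕ) (hm : 1 < m) (hmn : m ≤ n)
    (L : Type) [Ring L] [Algebra K L] [StarRing L] [StarModule K L]
    (ρ : LmnRep K m n L) (hL : IsLmn K m n L ρ)
    (L' : Type) [Ring L'] [Algebra K L'] [StarRing L'] [StarModule K L']
    (σ : LmnRep K 1 (n - m + 1) L') (hL' : IsLmn K 1 (n - m + 1) L' σ) :
    ∃ π : L →⋆ₐ[K] L', Function.Surjective π ∧
      ∀ (i : Fin m) (j : Fin n),
        π (ρ.x i j) =
          if (i : ℕ) < m - 1 then (if (i : ℕ) = (j : ℕ) then 1 else 0)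
          else if (j : ℕ) < m - 1 then 0
          else σ.x 0 ⟨(j : ℕ) - (m - 1), by have hj := j.2; omega⟩ := by
  have h1 : 1 ≤ m := le_of_lt hm
  obtain ⟨π, hπ, -⟩ := hL L' (extRep K m n h1 hmn L' σ)
  have hform : ∀ (i : Fin m) (j : Fin n),
      π (ρ.x i j) =
        if (i : ℕ) < m - 1 then (if (i : ℕ) = (j : ℕ) then 1 else 0)
        else if (j : ℕ) < m - 1 then 0
        else σ.x 0 ⟨(j : ℕ) - (m - 1), by have hj := j.2; omega⟩ := by
    intro i j
    rw [hπ i j]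
    rfl
  refine ⟨π, ?_, hform⟩
  -- surjectivity
  have hgen : ∀ k : Fin (n - m + 1),
      π (ρ.x ⟨m - 1, by omega⟩ ⟨m - 1 + (k : ℕ), by have := k.2; omega⟩) = σ.x 0 k := by
    intro k
    rw [hform]
    rw [if_neg (by simp), if_neg (by simp)]
    congr 1
    exact Fin.ext (by simp)
  have hmem : ∀ k : Fin (n - m + 1), σ.x 0 k ∈ π.range := by
    intro k
    exact ⟨_, hgen k⟩
  let σ' : LmnRep K 1 (n - m + 1) π.range :=
    { x := fun _ k => ⟨σ.x 0 k, hmem k⟩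
      row := fun i j => by
        rw [if_pos (Subsingleton.elim i j)]
        refine Subtype.ext ?_
        push_cast
        have h := σ.row 0 0
        rw [if_pos rfl] at h
        simpa using h
      col := fun i j => by
        refine Subtype.ext ?_
        push_cast
        have h := σ.col i j
        rw [Fin.sum_univ_one] at h
        simpa [Fin.sum_univ_one, apply_ite Subtype.val] using h }
  obtain ⟨ψ, hψ, -⟩ := hL' π.range σ'
  obtain ⟨φ0, -, huniq⟩ := hL' L' σ
  have e1 : π.range.subtype.comp ψ = φ0 := by
    apply huniq
    intro i j
    simp only [StarAlgHom.comp_apply, hψ]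
    exact congrArg (fun t => σ.x t j) (Subsingleton.elim (0 : Fin 1) i)
  have e2 : (StarAlgHom.id K L') = φ0 := by
    apply huniq
    intro i j
    rfl
  have key : ∀ y : L', ((ψ y : π.range) : L') = y := by
    intro y
    have := DFunLike.congr_fun (e1.trans e2.symm) y
    simpa using this
  intro y
  obtain ⟨a, ha⟩ := (ψ y).2
  exact ⟨a, ha.trans (key y)⟩
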